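/- Let X be a proper metric space and A ⊆ X a subset. Any element of the Higson algebra of A extends: if φ : A → ℝ is a bounded function satisfying the Higson condition on A, then there exists a bounded function φ̂ : X → ℝ satisfying the Higson condition on X with φ̂|_A = φ. (Concretely for X = ℤ with A = U ⊆ ℤ: given a bounded Higson function φ : U → ℝ, the piecewise-linear interpolation φ̄ : ℤ → ℝ defined by φ̄(z) = (φ(z₋)(z₊ − z) + φ(z₊)(z − z₋))/(z₊ − z₋) for z ∉ U, with z₋ and z₊ the nearest points of U below and above z, is a bounded Higson function extending φ.) -/

import Mathlib

/-- A bounded function is Higson if far out it has arbitrarily small variation over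
entourages. -/
def Higson {Z : Type*} [MetricSpace Z] (ψ : Z → ℝ) : Prop :=
  (∃ C : ℝ, ∀ z, |ψ z| ≤ C) ∧
  ∀ R : ℝ, 0 ≤ R → ∀ ε : ℝ, 0 < ε → ∃ K : Set Z, Bornology.IsBounded K ∧
    ∀ x y : Z, dist x y ≤ R → ¬(x ∈ K ∧ y ∈ K) → |ψ x - ψ y| < ε

/-- Threshold radii built from a given bound sequence `t`. -/
private noncomputable def rhoF (t : ℕ → ℝ) : ℕ → ℝ
  | 0 => 0
  | (j+1) => max (rhoF t j + 2*j + 4) (t (j+1) + 2*((j:ℝ)+2) + 2)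

private lemma rhoF_succ (t : ℕ → ℝ) (j : ℕ) : rhoF t j + 2*j + 4 ≤ rhoF t (j+1) :=
  le_max_left _ _

private lemma rhoF_t (t : ℕ → ℝ) (j : ℕ) :
    t (j+1) + 2*((j:ℝ)+2) + 2 ≤ rhoF t (j+1) := le_max_right _ _

private lemma rhoF_ge (t : ℕ → ℝ) : ∀ j : ℕ, 2*(j:ℝ) ≤ rhoF t j
  | 0 => by simp [rhoF]
  | (j+1) => by
      have h1 := rhoF_ge t j
      have h2 := rhoF_succ t j
      push_cast at h2 ⊢
      linarith

private lemma rhoF_mono (t : ℕ → ℝ) : Monotone (rhoF t) := by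
  apply monotone_nat_of_le_succ
  intro j
  have h2 := rhoF_succ t j
  have : (0:ℝ) ≤ 2*j := by positivity
  linarith

private lemma rhoF_exists (t : ℕ → ℝ) (m : ℝ) : ∃ n : ℕ, m < rhoF t (n+1) := by
  obtain ⟨n, hn⟩ := exists_nat_gt (m/2)
  refine ⟨n, ?_⟩
  have h1 := rhoF_ge t (n+1)
  push_cast at h1
  nlinarith

open Classical in
private noncomputable def jF (t : ℕ → ℝ) (m : ℝ) : ℕ := Nat.find (rhoF_exists t m)

private lemma jF_lt (t : ℕ → ℝ) (m : ℝ) : m < rhoF t (jF t m + 1) :=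
  Nat.find_spec (rhoF_exists t m)

private lemma jF_le (t : ℕ → ℝ) (m : ℝ) (hm : 0 ≤ m) : rhoF t (jF t m) ≤ m := by
  rcases h : jF t m with _ | k
  · simpa [rhoF] using hm
  · have := Nat.find_min (rhoF_exists t m) (show k < jF t m by omega)
    simp only [not_lt] at this
    simpa [h] using this

private lemma jF_ge (t : ℕ → ℝ) (m : ℝ) (J : ℕ) (h : rhoF t (J+1) ≤ m) :
    J + 1 ≤ jF t m := by
  by_contra hc
  push_neg at hc
  have h1 : jF t m + 1 ≤ J + 1 := by omega
  have := (rhoF_mono t h1).trans_lt (lt_of_le_of_lt h (jF_lt t m))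
  exact lt_irrefl _ this

private lemma jF_jump (t : ℕ → ℝ) (m m' R : ℝ) (h1 : m' ≤ m + R)
    (h2 : R ≤ 2*(jF t m) + 4) : jF t m' ≤ jF t m + 1 := by
  apply Nat.find_min'
  have h3 := jF_lt t m
  have h4 := rhoF_succ t (jF t m + 1)
  push_cast at h4 h2 ⊢
  linarith

private lemma clamp_abs (a b : ℝ) : |max 0 (min 1 a) - max 0 (min 1 b)| ≤ |a - b| := by
  rw [abs_sub_le_iff]
  constructor <;>
    (simp only [min_def, max_def]; split_ifs <;>
      rcases abs_cases (a - b) with ⟨h1, h2⟩ | ⟨h1, h2⟩ <;> linarith)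

private lemma uvar (dx dy rx ry R : ℝ) (hrx : 2 ≤ rx) (hry : 2 ≤ ry)
    (h1 : rx ≤ ry + 1) (h2 : ry ≤ rx + 1) (hdx : 0 ≤ dx) (hdy : 0 ≤ dy)
    (hR : |dx - dy| ≤ R) (_hdy2 : dy < 2*ry) :
    |max 0 (min 1 (2 - dx/rx)) - max 0 (min 1 (2 - dy/ry))| ≤ (2*R+6)/ry := by
  have hR0 : 0 ≤ R := le_trans (abs_nonneg _) hR
  have hrx0 : (0:ℝ) < rx := by linarith
  have hry0 : (0:ℝ) < ry := by linarith
  rcases abs_le.1 hR with ⟨hRa, hRb⟩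
  rcases le_or_gt (2*rx) dx with hbig | hsmall
  · have hux : max 0 (min 1 (2 - dx/rx)) = 0 := by
      have : 2 - dx/rx ≤ 0 := by
        rw [sub_nonpos, le_div_iff₀ hrx0]; linarith
      rw [max_eq_left]
      exact le_trans (min_le_right _ _) this
    rw [hux, zero_sub, abs_neg, abs_of_nonneg (le_max_left _ _)]
    apply max_le
    · positivity
    · apply le_trans (min_le_right _ _)
      have he : 2 - dy/ry = (2*ry - dy)/ry := by field_simp
      have hnum : 2*ry - dy ≤ 2*R + 6 := by linarith
      rw [he]
      gcongr
  · apply le_trans (clamp_abs _ _)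
    have he : (2 - dx/rx) - (2 - dy/ry) = (dy*rx - dx*ry)/(ry*rx) := by
      field_simp; ring
    have hnum : |dy*rx - dx*ry| ≤ (2*R+6)*rx := by
      rw [abs_le]
      constructor
      · nlinarith
      · nlinarith
    calc |2 - dx/rx - (2 - dy/ry)| = |dy*rx - dx*ry| / (ry*rx) := by
          rw [he, abs_div, abs_of_pos (mul_pos hry0 hrx0)]
      _ ≤ ((2*R+6)*rx) / (ry*rx) := by gcongr
      _ = (2*R+6)/ry := by field_simp

/-- On a proper metric space every bounded Higson function on a subset extends to a
bounded Higson function on the whole space. -/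
theorem stmt10 {X : Type*} [MetricSpace X] [ProperSpace X] (A : Set X)
    (φ : A → ℝ) (hφ : Higson φ) :
    ∃ φhat : X → ℝ, Higson φhat ∧ ∀ a : A, φhat a = φ a := by
  by_cases hA : A.Nonempty
  case neg =>
    refine ⟨fun _ => 0, ⟨⟨0, fun z => by simp⟩,
      fun R hR ε hε => ⟨∅, Bornology.isBounded_empty, fun x y _ _ => by simpa using hε⟩⟩,
      fun a => absurd ⟨(a : X), a.2⟩ hA⟩
  obtain ⟨a0, ha0⟩ := hA
  obtain ⟨C, hC⟩ := hφ.1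
  have hC0 : 0 ≤ C := le_trans (abs_nonneg _) (hC ⟨a0, ha0⟩)
  -- control radii coming from the Higson property of φ
  have hKfam : ∀ j : ℕ, ∃ tj : ℝ, ∀ p q : A, dist (p:X) (q:X) ≤ 8*((j:ℝ)+1) →
      tj < dist (p:X) a0 → |φ p - φ q| < 1/((j:ℝ)+1) := by
    intro j
    obtain ⟨K, hKb, hKv⟩ := hφ.2 (8*((j:ℝ)+1)) (by positivity) (1/((j:ℝ)+1)) (by positivity)
    obtain ⟨tj, htj⟩ := hKb.subset_closedBall ⟨a0, ha0⟩
    refine ⟨tj, fun p q hpq hfar => ?_⟩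
    have hp : p ∉ K := by
      intro hp
      have h2 := htj hp
      rw [Metric.mem_closedBall, Subtype.dist_eq] at h2
      exact absurd h2 (not_le.2 hfar)
    refine hKv p q ?_ (fun h => hp h.1)
    rwa [Subtype.dist_eq]
  choose t ht using hKfam
  -- near-point selection
  have hselE : ∀ x : X, ∃ a : A, dist x (a:X) ≤ Metric.infDist x A + 1 ∧
      (x ∈ A → (a:X) = x) := by
    intro x
    by_cases hx : x ∈ A
    · refine ⟨⟨x, hx⟩, ?_, fun _ => rfl⟩
      have h0 : (0:ℝ) ≤ Metric.infDist x A := Metric.infDist_nonneg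
      have h1 : dist x ((⟨x, hx⟩ : A) : X) = 0 := by simp
      linarith
    · obtain ⟨y, hy, hyd⟩ := (Metric.infDist_lt_iff ⟨a0, ha0⟩).1
        (lt_add_of_pos_right (Metric.infDist x A) one_pos)
      exact ⟨⟨y, hy⟩, le_of_lt hyd, fun h => absurd h hx⟩
  choose sel hseld hselm using hselE
  refine ⟨fun x => max 0 (min 1 (2 - Metric.infDist x A / ((jF t (dist x a0) : ℝ) + 1)))
      * φ (sel x), ⟨⟨C, ?_⟩, ?_⟩, ?_⟩
  · -- boundedness
    intro z
    rw [abs_mul, abs_of_nonneg (le_max_left _ _)]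
    calc max 0 (min 1 (2 - Metric.infDist z A / ((jF t (dist z a0) : ℝ) + 1))) * |φ (sel z)|
        ≤ 1 * C :=
          mul_le_mul (max_le zero_le_one (min_le_left _ _)) (hC _) (abs_nonneg _) zero_le_one
      _ = C := one_mul C
  · -- the Higson variation condition
    intro R hR ε hε
    obtain ⟨J, hJ⟩ := exists_nat_gt (max R ((C*(2*R+6)+1)/ε))
    have hJR : R < J := lt_of_le_of_lt (le_max_left _ _) hJ
    have hJε : C*(2*R+6)+1 < ε*J := by
      have h2 := lt_of_le_of_lt (le_max_right _ _) hJ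
      rw [div_lt_iff₀ hε] at h2
      linarith
    refine ⟨Metric.closedBall a0 (rhoF t (J+1) + R + 1), Metric.isBounded_closedBall, ?_⟩
    have key : ∀ p q : X, dist p q ≤ R → J+1 ≤ jF t (dist p a0) → J+1 ≤ jF t (dist q a0) →
        0 < max 0 (min 1 (2 - Metric.infDist q A / ((jF t (dist q a0) : ℝ) + 1))) →
        |max 0 (min 1 (2 - Metric.infDist p A / ((jF t (dist p a0) : ℝ) + 1))) * φ (sel p)
          - max 0 (min 1 (2 - Metric.infDist q A / ((jF t (dist q a0) : ℝ) + 1))) * φ (sel q)|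
          < ε := by
      intro p q hpq hjp hjq huq
      set dp := Metric.infDist p A with hdp
      set dq := Metric.infDist q A with hdq
      set jp := jF t (dist p a0) with hjpd
      set jq := jF t (dist q a0) with hjqd
      set rp : ℝ := (jp : ℝ) + 1 with hrp
      set rq : ℝ := (jq : ℝ) + 1 with hrq
      have hjpc : (J:ℝ) + 1 ≤ (jp:ℝ) := by exact_mod_cast hjp
      have hjqc : (J:ℝ) + 1 ≤ (jq:ℝ) := by exact_mod_cast hjq
      have hJ0 : (0:ℝ) ≤ J := Nat.cast_nonneg J
      have hrp2 : 2 ≤ rp := by rw [hrp]; linarith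
      have hrq2 : 2 ≤ rq := by rw [hrq]; linarith
      have hrq0 : (0:ℝ) < rq := by linarith
      have hdp0 : 0 ≤ dp := Metric.infDist_nonneg
      have hdq0 : 0 ≤ dq := Metric.infDist_nonneg
      have hRnn : 0 ≤ R := hR
      -- infDist is 1-Lipschitz
      have hdd : |dp - dq| ≤ R := by
        rw [abs_le]
        have l1 : dp ≤ dq + dist p q := Metric.infDist_le_infDist_add_dist
        have l2 : dq ≤ dp + dist q p := Metric.infDist_le_infDist_add_dist
        rw [dist_comm q p] at l2
        constructor <;> linarith
      -- base distances are close
      have hmm : |dist p a0 - dist q a0| ≤ R := le_trans (abs_dist_sub_le p q a0) hpq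
      rcases abs_le.1 hmm with ⟨hmm1, hmm2⟩
      -- indices jump by at most one
      have hjqp : jq ≤ jp + 1 := by
        apply jF_jump t (dist p a0) (dist q a0) R (by linarith)
        push_cast
        linarith
      have hjpq : jp ≤ jq + 1 := by
        apply jF_jump t (dist q a0) (dist p a0) R (by linarith)
        push_cast
        linarith
      have hr1 : rp ≤ rq + 1 := by
        rw [hrp, hrq]
        have : (jp:ℝ) ≤ (jq:ℝ) + 1 := by exact_mod_cast hjpq
        linarith
      have hr2 : rq ≤ rp + 1 := by
        rw [hrp, hrq]
        have : (jq:ℝ) ≤ (jp:ℝ) + 1 := by exact_mod_cast hjqp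
        linarith
      -- u q > 0 gives dq < 2 rq
      have hdq2 : dq < 2*rq := by
        rcases lt_max_iff.1 huq with h | h
        · exact absurd h (lt_irrefl _)
        · have h2 := (lt_min_iff.1 h).2
          have h3 : dq / rq < 2 := by linarith
          calc dq = dq / rq * rq := by field_simp
            _ < 2 * rq := by
                exact mul_lt_mul_of_pos_right h3 hrq0
      -- Term 1 : cutoff variation
      have hT1 : |max 0 (min 1 (2 - dp/rp)) - max 0 (min 1 (2 - dq/rq))| ≤ (2*R+6)/rq :=
        uvar dp dq rp rq R hrp2 hrq2 hr1 hr2 hdp0 hdq0 hdd hdq2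
      -- Term 2 : values of φ at the two selected points are close
      have hT2 : |φ (sel p) - φ (sel q)| < 1/rq := by
        have hdsq : dist q (sel q : X) ≤ dq + 1 := hseld q
        have hdsp : dist p (sel p : X) ≤ dp + 1 := hseld p
        have hdpq : dp ≤ dq + R := by rcases abs_le.1 hdd with ⟨l1, l2⟩; linarith
        have hdist : dist ((sel q : A) : X) ((sel p : A) : X) ≤ 8*((jq:ℝ)+1) := by
          have t1 : dist ((sel q : A) : X) ((sel p : A) : X) ≤
              dist ((sel q : A) : X) q + dist q p + dist p ((sel p : A) : X) :=
            dist_triangle4 _ _ _ _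
          rw [dist_comm ((sel q : A) : X) q, dist_comm q p] at t1
          have : (jq:ℝ) + 1 = rq := rfl
          rw [this]
          linarith
        have hfar : t jq < dist ((sel q : A) : X) a0 := by
          have t1 : dist q a0 ≤ dist q ((sel q : A) : X) + dist ((sel q : A) : X) a0 :=
            dist_triangle _ _ _
          have hmq : rhoF t jq ≤ dist q a0 := jF_le t _ dist_nonneg
          obtain ⟨k, hk⟩ : ∃ k, jq = k + 1 := ⟨jq - 1, by omega⟩
          have t2 := rhoF_t t k
          rw [← hk] at t2
          have hkc : (k:ℝ) + 2 = (jq:ℝ) + 1 := by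
            have : (jq:ℝ) = (k:ℝ) + 1 := by exact_mod_cast hk
            linarith
          rw [hkc] at t2
          have : (jq:ℝ) + 1 = rq := rfl
          rw [this] at t2
          linarith
        have := ht jq (sel q) (sel p) hdist hfar
        rw [abs_sub_comm] at this
        have hrqe : (jq:ℝ) + 1 = rq := rfl
        rwa [hrqe] at this
      -- put everything together
      have hid : max 0 (min 1 (2 - dp/rp)) * φ (sel p) - max 0 (min 1 (2 - dq/rq)) * φ (sel q)
          = (max 0 (min 1 (2 - dp/rp)) - max 0 (min 1 (2 - dq/rq))) * φ (sel p)
            + max 0 (min 1 (2 - dq/rq)) * (φ (sel p) - φ (sel q)) := by ring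
      have huq1 : max 0 (min 1 (2 - dq/rq)) ≤ 1 := max_le zero_le_one (min_le_left _ _)
      have huq0 : 0 ≤ max 0 (min 1 (2 - dq/rq)) := le_max_left _ _
      have hB1 : (0:ℝ) ≤ (2*R+6)/rq := by positivity
      calc |max 0 (min 1 (2 - dp/rp)) * φ (sel p) - max 0 (min 1 (2 - dq/rq)) * φ (sel q)|
          = |(max 0 (min 1 (2 - dp/rp)) - max 0 (min 1 (2 - dq/rq))) * φ (sel p)
              + max 0 (min 1 (2 - dq/rq)) * (φ (sel p) - φ (sel q))| := by rw [hid]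
        _ ≤ |(max 0 (min 1 (2 - dp/rp)) - max 0 (min 1 (2 - dq/rq))) * φ (sel p)|
              + |max 0 (min 1 (2 - dq/rq)) * (φ (sel p) - φ (sel q))| := abs_add_le _ _
        _ = |max 0 (min 1 (2 - dp/rp)) - max 0 (min 1 (2 - dq/rq))| * |φ (sel p)|
              + max 0 (min 1 (2 - dq/rq)) * |φ (sel p) - φ (sel q)| := by
            rw [abs_mul, abs_mul, abs_of_nonneg huq0]
        _ ≤ ((2*R+6)/rq) * C + 1 * (1/rq) :=
            add_le_add (mul_le_mul hT1 (hC _) (abs_nonneg _) hB1)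
              (mul_le_mul huq1 hT2.le (abs_nonneg _) zero_le_one)
        _ = (C*(2*R+6)+1)/rq := by field_simp
        _ < ε := by
            rw [div_lt_iff₀ hrq0]
            have : ε * (J:ℝ) ≤ ε * rq := by
              apply mul_le_mul_of_nonneg_left _ hε.le
              rw [hrq]; linarith
            linarith
    -- now use `key` to conclude
    intro x y hxy hK
    beta_reduce
    have hfar2 : rhoF t (J+1) ≤ dist x a0 ∧ rhoF t (J+1) ≤ dist y a0 := by
      rcases not_and_or.1 hK with h | h
      · rw [Metric.mem_closedBall, not_le] at h
        have h2 : dist x a0 ≤ dist x y + dist y a0 := dist_triangle _ _ _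
        constructor <;> linarith
      · rw [Metric.mem_closedBall, not_le] at h
        have h2 : dist y a0 ≤ dist y x + dist x a0 := dist_triangle _ _ _
        rw [dist_comm y x] at h2
        constructor <;> linarith
    have hjx : J+1 ≤ jF t (dist x a0) := jF_ge t _ J hfar2.1
    have hjy : J+1 ≤ jF t (dist y a0) := jF_ge t _ J hfar2.2
    by_cases hy : 0 < max 0 (min 1 (2 - Metric.infDist y A / ((jF t (dist y a0) : ℝ) + 1)))
    · exact key x y hxy hjx hjy hy
    · by_cases hx : 0 < max 0 (min 1 (2 - Metric.infDist x A / ((jF t (dist x a0) : ℝ) + 1)))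
      · rw [abs_sub_comm]
        exact key y x (by rwa [dist_comm]) hjy hjx hx
      · have hy0 : max 0 (min 1 (2 - Metric.infDist y A / ((jF t (dist y a0) : ℝ) + 1))) = 0 :=
          le_antisymm (not_lt.1 hy) (le_max_left _ _)
        have hx0 : max 0 (min 1 (2 - Metric.infDist x A / ((jF t (dist x a0) : ℝ) + 1))) = 0 :=
          le_antisymm (not_lt.1 hx) (le_max_left _ _)
        rw [hx0, hy0]
        simpa using hε
  · -- restriction to A
    intro a
    have h1 : (sel (a : X) : X) = (a : X) := hselm _ a.2
    have h2 : sel (a : X) = a := Subtype.ext h1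
    have h3 : Metric.infDist ((a : X)) A = 0 := Metric.infDist_zero_of_mem a.2
    simp [h2, h3]
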